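/- For every M > 0 there exists a constant κ > 0, depending only on M, with the following property: for every n ≥ 3 and all i.i.d. real-valued random variables K_1, …, K_n with E[K_1] = β and E[K_1²] ≤ M, the truncated sample mean β̂ := (1/n)·Σ_{i=1}^n K_i·1_{{|K_i| ≤ ρ_n}}, with ρ_n := √(n/ln n), satisfies P(|β̂ − β| ≥ κ·√((ln n)/n)) ≤ 2·n^{−4}. (This is the generic Bernstein-type concentration bound for the truncated empirical mean underlying the proof of Lemma 3 of the paper.) -/

import Mathlib

open MeasureTheory ProbabilityTheory


lemma exp_le_quad {x : ℝ} (hx : x ≤ 1) : Real.exp x ≤ 1 + x + x ^ 2 := by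
  rcases le_or_gt (-1) x with h | h
  · have habs : |x| ≤ 1 := abs_le.mpr ⟨h, hx⟩
    have := Real.exp_bound habs (n := 2) (by norm_num)
    have h2 : |Real.exp x - (1 + x)| ≤ |x| ^ 2 * (3 / 4) := by
      convert this using 2
      · simp [Finset.sum_range_succ]
      · norm_num
    have := (abs_sub_le_iff.mp h2).1
    have hx2 : |x| ^ 2 = x ^ 2 := sq_abs x
    nlinarith [sq_nonneg x]
  · have h1 : Real.exp x ≤ Real.exp (-1) := Real.exp_le_exp.mpr (by linarith)
    have h2 : Real.exp (-1) ≤ 1 / 2 := by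
      rw [Real.exp_neg]
      rw [inv_le_iff_one_le_mul₀ (Real.exp_pos 1)]
      nlinarith [Real.add_one_le_exp (1:ℝ)]
    nlinarith [sq_nonneg (x + 1/2)]

lemma mgf_aux {Ω : Type*} [MeasurableSpace Ω] (P : Measure Ω) [IsProbabilityMeasure P]
    (Y : Ω → ℝ) (hY : Measurable Y) (c v s : ℝ) (hs : 0 ≤ s)
    (hb : ∀ ω, |Y ω| ≤ c) (hsb : s * c ≤ 1) (h0 : ∫ ω, Y ω ∂P = 0)
    (hv : ∫ ω, (Y ω) ^ 2 ∂P ≤ v) :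
    mgf Y P s ≤ Real.exp (s ^ 2 * v) := by
  have intY : Integrable Y P := by
    refine (integrable_const c).mono' hY.aestronglyMeasurable (ae_of_all _ fun ω => ?_)
    simpa [Real.norm_eq_abs] using hb ω
  have intY2 : Integrable (fun ω => (Y ω) ^ 2) P := by
    refine (integrable_const (c ^ 2)).mono' (hY.pow_const 2).aestronglyMeasurable
      (ae_of_all _ fun ω => ?_)
    have : |Y ω| ^ 2 ≤ c ^ 2 := pow_le_pow_left₀ (abs_nonneg _) (hb ω) 2
    simpa [Real.norm_eq_abs, abs_pow, sq_abs] using this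
  have intexp : Integrable (fun ω => Real.exp (s * Y ω)) P := by
    refine (integrable_const (Real.exp (s * c))).mono'
      ((hY.const_mul s).exp).aestronglyMeasurable (ae_of_all _ fun ω => ?_)
    rw [Real.norm_eq_abs, abs_of_pos (Real.exp_pos _), Real.exp_le_exp]
    exact mul_le_mul_of_nonneg_left ((le_abs_self _).trans (hb ω)) hs
  have key : ∀ ω, Real.exp (s * Y ω) ≤ 1 + s * Y ω + s ^ 2 * (Y ω) ^ 2 := by
    intro ω
    have h1 : s * Y ω ≤ 1 :=
      le_trans (le_trans (le_abs_self _) (by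
        rw [abs_mul, abs_of_nonneg hs]
        exact mul_le_mul_of_nonneg_left (hb ω) hs)) hsb
    have := exp_le_quad h1
    calc Real.exp (s * Y ω) ≤ 1 + s * Y ω + (s * Y ω) ^ 2 := this
      _ = 1 + s * Y ω + s ^ 2 * (Y ω) ^ 2 := by ring
  have intrhs : Integrable (fun ω => 1 + s * Y ω + s ^ 2 * (Y ω) ^ 2) P :=
    ((integrable_const 1).add (intY.const_mul s)).add (intY2.const_mul (s ^ 2))
  calc mgf Y P s = ∫ ω, Real.exp (s * Y ω) ∂P := rfl
    _ ≤ ∫ ω, (1 + s * Y ω + s ^ 2 * (Y ω) ^ 2) ∂P := integral_mono intexp intrhs key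
    _ = 1 + s * (∫ ω, Y ω ∂P) + s ^ 2 * ∫ ω, (Y ω) ^ 2 ∂P := by
        have i1 : Integrable (fun ω => 1 + s * Y ω) P := by
          exact (integrable_const 1).add (intY.const_mul s)
        have i0 : Integrable (fun ω => (1:ℝ)) P := integrable_const 1
        rw [integral_add i1 (intY2.const_mul (s ^ 2)), integral_add i0 (intY.const_mul s),
          MeasureTheory.integral_const_mul, MeasureTheory.integral_const_mul, integral_const]
        simp
    _ ≤ 1 + s ^ 2 * v := by
        rw [h0]
        have := mul_le_mul_of_nonneg_left hv (sq_nonneg s)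
        linarith
    _ ≤ Real.exp (s ^ 2 * v) := by linarith [Real.add_one_le_exp (s ^ 2 * v)]

lemma chernoff_aux {Ω : Type*} [MeasurableSpace Ω] (P : Measure Ω) [IsProbabilityMeasure P]
    {n : ℕ} (Y : Fin n → Ω → ℝ) (hY : ∀ i, Measurable (Y i))
    (hindep : iIndepFun Y P)
    (c v s a : ℝ) (hs : 0 ≤ s)
    (hb : ∀ i ω, |Y i ω| ≤ c) (hsb : s * c ≤ 1) (h0 : ∀ i, ∫ ω, Y i ω ∂P = 0)
    (hv2 : ∀ i, ∫ ω, (Y i ω) ^ 2 ∂P ≤ v) :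
    P {ω | a ≤ ∑ i, Y i ω} ≤ ENNReal.ofReal (Real.exp (-(s * a) + n * (s ^ 2 * v))) := by
  have intexp_i : ∀ i, Integrable (fun ω => Real.exp (s * Y i ω)) P := by
    intro i
    refine (integrable_const (Real.exp (s * c))).mono'
      ((hY i).const_mul s).exp.aestronglyMeasurable (ae_of_all _ fun ω => ?_)
    rw [Real.norm_eq_abs, abs_of_pos (Real.exp_pos _), Real.exp_le_exp]
    exact mul_le_mul_of_nonneg_left ((le_abs_self _).trans (hb i ω)) hs
  have intexp_sum : Integrable (fun ω => Real.exp (s * (∑ i, Y i) ω)) P :=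
    hindep.integrable_exp_mul_sum hY (fun i _ => intexp_i i)
  have hch := measure_ge_le_exp_mul_mgf (μ := P) (X := ∑ i, Y i) a hs intexp_sum
  have hmgf : mgf (∑ i, Y i) P s ≤ Real.exp (s ^ 2 * v) ^ n := by
    rw [hindep.mgf_sum hY Finset.univ]
    calc ∏ i, mgf (Y i) P s ≤ ∏ _i : Fin n, Real.exp (s ^ 2 * v) :=
          Finset.prod_le_prod (fun i _ => mgf_nonneg)
            (fun i _ => mgf_aux P (Y i) (hY i) c v s hs (hb i) hsb (h0 i) (hv2 i))
      _ = Real.exp (s ^ 2 * v) ^ n := by simp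
  have hset : {ω | a ≤ ∑ i, Y i ω} = {ω | a ≤ (∑ i, Y i) ω} := by
    ext ω; simp [Finset.sum_apply]
  have htr : (P {ω | a ≤ ∑ i, Y i ω}).toReal
      ≤ Real.exp (-(s * a) + n * (s ^ 2 * v)) := by
    rw [hset]
    refine le_trans hch ?_
    have h1 : Real.exp (-s * a) * mgf (∑ i, Y i) P s
        ≤ Real.exp (-s * a) * Real.exp (s ^ 2 * v) ^ n :=
      mul_le_mul_of_nonneg_left hmgf (Real.exp_pos _).le
    refine le_trans h1 (le_of_eq ?_)
    rw [← Real.exp_nat_mul, ← Real.exp_add]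
    ring_nf
  rw [← ENNReal.ofReal_toReal (measure_ne_top P _)]
  exact ENNReal.ofReal_le_ofReal htr

/-- generic Bernstein-type concentration bound for the truncated
empirical mean, underlying the proof of Lemma 3 of the paper.
For every `M > 0` there is a `κ > 0`, depending only on `M`, such that for every
`n ≥ 3` and all i.i.d. `K₁, …, Kₙ` with `E[K₁] = β` and `E[K₁²] ≤ M`, the truncated
sample mean `β̂ = (1/n) Σᵢ Kᵢ 1_{|Kᵢ| ≤ ρₙ}` with `ρₙ = √(n / ln n)` satisfies
`P(|β̂ − β| ≥ κ √((ln n)/n)) ≤ 2 n⁻⁴`. -/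
theorem truncated_mean_concentration (M : ℝ) (hM : 0 < M) :
    ∃ κ : ℝ, 0 < κ ∧
      ∀ (Ω : Type u) (_ : MeasurableSpace Ω) (P : Measure Ω)
        (_ : IsProbabilityMeasure P)
        (n : ℕ), 3 ≤ n →
        ∀ (K : Fin n → Ω → ℝ),
          (∀ i, Measurable (K i)) →
          iIndepFun K P →
          (∀ i j, IdentDistrib (K i) (K j) P P) →
          ∀ (β : ℝ),
          (∀ i, Integrable (K i) P) →
          (∀ i, Integrable (fun ω => (K i ω) ^ 2) P) →
          (∀ i, ∫ ω, K i ω ∂P = β) →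
          (∀ i, ∫ ω, (K i ω) ^ 2 ∂P ≤ M) →
          P {ω | κ * Real.sqrt (Real.log n / n)
                  ≤ |(1 / (n : ℝ)) * (∑ i,
                        if |K i ω| ≤ Real.sqrt ((n : ℝ) / Real.log n)
                          then K i ω else 0) - β|}
            ≤ ENNReal.ofReal (2 / (n : ℝ) ^ 4) := by
  refine ⟨3 / 2 * M + 8, by linarith, ?_⟩
  intro Ω _ P _ n hn3 K hKmeas hKindep hKid β hKint hKint2 hKmean hK2
  set κ : ℝ := 3 / 2 * M + 8 with hκ_def
  have hn3' : (3 : ℝ) ≤ (n : ℝ) := by exact_mod_cast hn3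
  have hnpos : (0 : ℝ) < n := by linarith
  have hlog : 0 < Real.log n := Real.log_pos (by linarith)
  set ρ : ℝ := Real.sqrt ((n : ℝ) / Real.log n) with hρ_def
  set t : ℝ := Real.sqrt (Real.log n / n) with ht_def
  have ht : 0 < t := Real.sqrt_pos.mpr (div_pos hlog hnpos)
  have hρ : 0 < ρ := Real.sqrt_pos.mpr (div_pos hnpos hlog)
  have htρ : t * ρ = 1 := by
    rw [ht_def, hρ_def, ← Real.sqrt_mul (div_pos hlog hnpos).le]
    rw [show Real.log n / n * ((n : ℝ) / Real.log n) = 1 by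
      field_simp]
    exact Real.sqrt_one
  have ht2 : t ^ 2 = Real.log n / n := Real.sq_sqrt (div_pos hlog hnpos).le
  have hnt2 : (n : ℝ) * t ^ 2 = Real.log n := by
    rw [ht2]; field_simp
  have hMρt : M / ρ = M * t := by
    rw [div_eq_iff hρ.ne', mul_assoc, htρ, mul_one]
  -- truncation function
  set g : ℝ → ℝ := fun x => if |x| ≤ ρ then x else 0 with hg_def
  have hgmeas : Measurable g :=
    Measurable.ite (measurableSet_le measurable_id.abs measurable_const)
      measurable_id measurable_const
  set T : Fin n → Ω → ℝ := fun i ω => g (K i ω) with hT_def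
  have hTmeas : ∀ i, Measurable (T i) := fun i => hgmeas.comp (hKmeas i)
  have hTb : ∀ i ω, |T i ω| ≤ ρ := by
    intro i ω
    simp only [hT_def, hg_def]
    split_ifs with h
    · exact h
    · simpa using hρ.le
  have intT : ∀ i, Integrable (T i) P := by
    intro i
    refine (integrable_const ρ).mono' (hTmeas i).aestronglyMeasurable
      (ae_of_all _ fun ω => ?_)
    simpa [Real.norm_eq_abs] using hTb i ω
  have intT2 : ∀ i, Integrable (fun ω => (T i ω) ^ 2) P := by
    intro i
    refine (integrable_const (ρ ^ 2)).mono' ((hTmeas i).pow_const 2).aestronglyMeasurable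
      (ae_of_all _ fun ω => ?_)
    have : |T i ω| ^ 2 ≤ ρ ^ 2 := pow_le_pow_left₀ (abs_nonneg _) (hTb i ω) 2
    simpa [Real.norm_eq_abs, abs_pow, sq_abs] using this
  have hT2K : ∀ i, ∫ ω, (T i ω) ^ 2 ∂P ≤ M := by
    intro i
    refine le_trans (integral_mono (intT2 i) (hKint2 i) fun ω => ?_) (hK2 i)
    simp only [hT_def, hg_def]
    split_ifs with h
    · exact le_rfl
    · simpa using sq_nonneg (K i ω)
  have habsint : ∀ f : Ω → ℝ, |∫ ω, f ω ∂P| ≤ ∫ ω, |f ω| ∂P := fun f => by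
    simpa [Real.norm_eq_abs] using norm_integral_le_integral_norm (μ := P) f
  set i0 : Fin n := ⟨0, by omega⟩ with hi0_def
  set μ : ℝ := ∫ ω, T i0 ω ∂P with hμ_def
  have hμ_all : ∀ i, ∫ ω, T i ω ∂P = μ := by
    intro i
    exact ((hKid i i0).comp hgmeas).integral_eq
  have hμabs : |μ| ≤ ρ := by
    rw [hμ_def]
    refine le_trans (habsint _) ?_
    calc ∫ ω, |T i0 ω| ∂P ≤ ∫ _ω, ρ ∂P :=
          integral_mono (intT i0).abs (integrable_const ρ) (fun ω => hTb i0 ω)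
      _ = ρ := by simp
  have hbias : |μ - β| ≤ M * t := by
    have heq : μ - β = ∫ ω, (T i0 ω - K i0 ω) ∂P := by
      rw [integral_sub (intT i0) (hKint i0), hμ_all i0, hKmean i0]
    have hpt : ∀ ω, |T i0 ω - K i0 ω| ≤ (K i0 ω) ^ 2 / ρ := by
      intro ω
      simp only [hT_def, hg_def]
      split_ifs with h
      · simp [div_nonneg (sq_nonneg _) hρ.le]
      · push_neg at h
        rw [zero_sub, abs_neg, le_div_iff₀ hρ]
        nlinarith [abs_nonneg (K i0 ω), sq_abs (K i0 ω)]
    have hint_abs : Integrable (fun ω => |T i0 ω - K i0 ω|) P := ((intT i0).sub (hKint i0)).abs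
    have hint_rhs : Integrable (fun ω => (K i0 ω) ^ 2 / ρ) P := (hKint2 i0).div_const ρ
    calc |μ - β| = |∫ ω, (T i0 ω - K i0 ω) ∂P| := by rw [heq]
      _ ≤ ∫ ω, |T i0 ω - K i0 ω| ∂P := habsint _
      _ ≤ ∫ ω, (K i0 ω) ^ 2 / ρ ∂P := integral_mono hint_abs hint_rhs hpt
      _ = (∫ ω, (K i0 ω) ^ 2 ∂P) / ρ := by rw [integral_div]
      _ ≤ M / ρ := by gcongr; exact hK2 i0
      _ = M * t := hMρt
  -- centered truncated variables
  set Y : Fin n → Ω → ℝ := fun i ω => T i ω - μ with hY_def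
  set Y' : Fin n → Ω → ℝ := fun i ω => -(T i ω - μ) with hY'_def
  have hYmeas : ∀ i, Measurable (Y i) := fun i => (hTmeas i).sub measurable_const
  have hY'meas : ∀ i, Measurable (Y' i) := fun i => (hYmeas i).neg
  have hYindep : iIndepFun Y P :=
    hKindep.comp (fun _ x => g x - μ) (fun _ => hgmeas.sub measurable_const)
  have hY'indep : iIndepFun Y' P :=
    hKindep.comp (fun _ x => -(g x - μ)) (fun _ => (hgmeas.sub measurable_const).neg)
  have hYb : ∀ i ω, |Y i ω| ≤ 2 * ρ := by
    intro i ω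
    calc |Y i ω| ≤ |T i ω| + |μ| := abs_sub _ _
      _ ≤ ρ + ρ := add_le_add (hTb i ω) hμabs
      _ = 2 * ρ := by ring
  have hY'b : ∀ i ω, |Y' i ω| ≤ 2 * ρ := by
    intro i ω
    rw [show Y' i ω = -(Y i ω) from rfl, abs_neg]
    exact hYb i ω
  have hY0 : ∀ i, ∫ ω, Y i ω ∂P = 0 := by
    intro i
    rw [hY_def]
    simp only
    rw [integral_sub (intT i) (integrable_const μ), hμ_all i, integral_const]
    simp
  have hY'0 : ∀ i, ∫ ω, Y' i ω ∂P = 0 := by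
    intro i
    have : Y' i = fun ω => -(Y i ω) := rfl
    rw [this, integral_neg, hY0 i, neg_zero]
  have hYvar : ∀ i, ∫ ω, (Y i ω) ^ 2 ∂P ≤ M := by
    intro i
    have hexpand : (fun ω => (Y i ω) ^ 2)
        = fun ω => ((T i ω) ^ 2 - (2 * μ) * T i ω) + μ ^ 2 := by
      funext ω; rw [hY_def]; ring
    have i1 : Integrable (fun ω => (T i ω) ^ 2 - (2 * μ) * T i ω) P :=
      (intT2 i).sub ((intT i).const_mul (2 * μ))
    rw [hexpand, integral_add i1 (integrable_const _),
      integral_sub (intT2 i) ((intT i).const_mul (2 * μ)),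
      MeasureTheory.integral_const_mul, hμ_all i, integral_const]
    have h1 := hT2K i
    have h2 := sq_nonneg μ
    simp only [measure_univ, ENNReal.toReal_one, probReal_univ, smul_eq_mul, one_mul]
    nlinarith
  have hY'var : ∀ i, ∫ ω, (Y' i ω) ^ 2 ∂P ≤ M := by
    intro i
    have : (fun ω => (Y' i ω) ^ 2) = fun ω => (Y i ω) ^ 2 := by
      funext ω; rw [hY'_def]; ring
    rw [this]; exact hYvar i
  -- Chernoff applications
  set s : ℝ := t / 2 with hs_def
  have hs : 0 ≤ s := by positivity
  have hsb : s * (2 * ρ) ≤ 1 := by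
    have h : s * (2 * ρ) = t * ρ := by rw [hs_def]; ring
    rw [h, htρ]
  set a : ℝ := (κ - M) * ((n : ℝ) * t) with ha_def
  have hchA := chernoff_aux P Y hYmeas hYindep (2 * ρ) M s a hs hYb hsb hY0 hYvar
  have hchB := chernoff_aux P Y' hY'meas hY'indep (2 * ρ) M s a hs hY'b hsb hY'0 hY'var
  -- event inclusion
  have hsub : {ω | κ * t ≤ |(1 / (n : ℝ)) * (∑ i, if |K i ω| ≤ ρ then K i ω else 0) - β|}
      ⊆ {ω | a ≤ ∑ i, Y i ω} ∪ {ω | a ≤ ∑ i, Y' i ω} := by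
    intro ω hω
    simp only [Set.mem_setOf_eq] at hω
    have hsumT : (∑ i, if |K i ω| ≤ ρ then K i ω else 0) = ∑ i, T i ω := rfl
    have hTS : ∑ i, T i ω = (∑ i, Y i ω) + (n : ℝ) * μ := by
      rw [hY_def]
      simp only
      rw [Finset.sum_sub_distrib, Finset.sum_const, Finset.card_univ, Fintype.card_fin]
      push_cast
      ring
    set S : ℝ := ∑ i, Y i ω with hS_def
    have hx : (1 / (n : ℝ)) * (∑ i, if |K i ω| ≤ ρ then K i ω else 0) - β
        = (1 / (n : ℝ)) * S + (μ - β) := by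
      rw [hsumT, hTS]
      field_simp
      ring
    rw [hx] at hω
    have h1 : κ * t ≤ (1 / (n : ℝ)) * |S| + M * t := by
      calc κ * t ≤ |(1 / (n : ℝ)) * S + (μ - β)| := hω
        _ ≤ |(1 / (n : ℝ)) * S| + |μ - β| := abs_add_le _ _
        _ ≤ (1 / (n : ℝ)) * |S| + M * t := by
            rw [abs_mul, abs_of_pos (by positivity : (0:ℝ) < 1 / (n:ℝ))]
            exact add_le_add le_rfl hbias
    have h2 : a ≤ |S| := by
      rw [ha_def]
      have hn' : (0:ℝ) < 1 / (n:ℝ) := by positivity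
      have : (κ - M) * t ≤ (1 / (n : ℝ)) * |S| := by linarith
      calc (κ - M) * ((n : ℝ) * t) = (n : ℝ) * ((κ - M) * t) := by ring
        _ ≤ (n : ℝ) * ((1 / (n : ℝ)) * |S|) :=
            mul_le_mul_of_nonneg_left this hnpos.le
        _ = |S| := by field_simp
    rcases le_abs.mp h2 with h | h
    · exact Or.inl h
    · refine Or.inr ?_
      simp only [Set.mem_setOf_eq, hY'_def, ← Finset.sum_neg_distrib]
      have hneg : ∑ i, Y' i ω = -S := by
        simp only [hS_def, hY'_def, hY_def, Finset.sum_neg_distrib]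
      have hgoal : a ≤ ∑ i, Y' i ω := by rw [hneg]; exact h
      simpa [hY'_def, Finset.sum_neg_distrib] using hgoal
  -- exponent computation
  have hexp : -(s * a) + (n : ℝ) * (s ^ 2 * M) = -(4 * Real.log n) := by
    have : -(s * a) + (n : ℝ) * (s ^ 2 * M) = -(4 * ((n : ℝ) * t ^ 2)) := by
      rw [hs_def, ha_def, hκ_def]; ring
    rw [this, hnt2]
  have hexpval : Real.exp (-(s * a) + (n : ℝ) * (s ^ 2 * M)) = ((n : ℝ) ^ 4)⁻¹ := by
    rw [hexp]
    have h4 : (4 : ℝ) * Real.log n = Real.log ((n : ℝ) ^ (4 : ℕ)) := by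
      rw [Real.log_pow]; norm_num
    rw [Real.exp_neg, h4, Real.exp_log (by positivity)]
  calc P {ω | κ * t ≤ |(1 / (n : ℝ)) * (∑ i, if |K i ω| ≤ ρ then K i ω else 0) - β|}
      ≤ P ({ω | a ≤ ∑ i, Y i ω} ∪ {ω | a ≤ ∑ i, Y' i ω}) := measure_mono hsub
    _ ≤ P {ω | a ≤ ∑ i, Y i ω} + P {ω | a ≤ ∑ i, Y' i ω} := measure_union_le _ _
    _ ≤ ENNReal.ofReal (Real.exp (-(s * a) + n * (s ^ 2 * M)))
        + ENNReal.ofReal (Real.exp (-(s * a) + n * (s ^ 2 * M))) := add_le_add hchA hchB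
    _ = ENNReal.ofReal (2 / (n : ℝ) ^ 4) := by
        rw [← ENNReal.ofReal_add (Real.exp_pos _).le (Real.exp_pos _).le, hexpval]
        congr 1
        rw [div_eq_mul_inv]
        ring
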